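/- arXiv:2007.10218 — 3 statements merged into one kernel-verified Lean document; each statement's English description precedes it below -/
import Mathlib

section
/- For every ρ > 0 one has g(ρ) := 1 + cosh²(ρ) - sinh²(ρ)/ρ² - cosh(ρ) sinh(ρ)/ρ ≥ 0; equivalently, 1/sinh²(ρ) + coth²(ρ) - 1/ρ² - coth(ρ)/ρ ≥ 0 for every ρ > 0. -/
open Real Set

lemma aux_mono (f f' : ℝ → ℝ) (hd : ∀ x, HasDerivAt f (f' x) x)
    (hpos : ∀ x, 0 ≤ x → 0 ≤ f' x) {a b : ℝ} (ha : 0 ≤ a) (hab : a ≤ b) :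
    f a ≤ f b := by
  have h : MonotoneOn f (Ici 0) := by
    apply monotoneOn_of_deriv_nonneg (convex_Ici 0)
    · exact (fun x _ => (hd x).differentiableAt.continuousAt.continuousWithinAt)
    · intro x hx
      exact ((hd x).differentiableAt).differentiableWithinAt
    · intro x hx
      rw [(hd x).deriv]
      rw [interior_Ici] at hx
      exact hpos x hx.le
  exact h ha (le_trans ha hab) hab

lemma L1 (x : ℝ) (hx : 0 ≤ x) : Real.sinh x ≤ x * Real.cosh x := by
  have := aux_mono (fun y => y * Real.cosh y - Real.sinh y)
    (fun y => y * Real.sinh y)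
    (fun y => by
      have h1 : HasDerivAt (fun y : ℝ => y * Real.cosh y) (Real.cosh y + y * Real.sinh y) y := by
        exact ((hasDerivAt_id' y).mul (Real.hasDerivAt_cosh y)).congr_deriv (by ring)
      exact (h1.sub (Real.hasDerivAt_sinh y)).congr_deriv (by ring))
    (fun y hy => mul_nonneg hy (Real.sinh_nonneg_iff.2 hy)) le_rfl hx
  simpa using this

lemma L2 (x : ℝ) (hx : 0 ≤ x) : 2 * Real.cosh x ≤ 2 + x * Real.sinh x := by
  have := aux_mono (fun y => 2 + y * Real.sinh y - 2 * Real.cosh y)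
    (fun y => y * Real.cosh y - Real.sinh y)
    (fun y => by
      have h1 : HasDerivAt (fun y : ℝ => y * Real.sinh y) (Real.sinh y + y * Real.cosh y) y := by
        exact ((hasDerivAt_id' y).mul (Real.hasDerivAt_sinh y)).congr_deriv (by ring)
      have h2 : HasDerivAt (fun y : ℝ => 2 + y * Real.sinh y) (Real.sinh y + y * Real.cosh y) y :=
        (hasDerivAt_const y 2).add h1 |>.congr_deriv (by ring)
      have h3 := h2.sub ((Real.hasDerivAt_cosh y).const_mul 2)
      exact h3.congr_deriv (by ring))
    (fun y hy => sub_nonneg.2 (L1 y hy)) le_rfl hx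
  simpa using this

lemma L3 (x : ℝ) (hx : 0 ≤ x) : 3 * Real.sinh x ≤ x * (Real.cosh x + 2) := by
  have := aux_mono (fun y => y * (Real.cosh y + 2) - 3 * Real.sinh y)
    (fun y => 2 + y * Real.sinh y - 2 * Real.cosh y)
    (fun y => by
      have h1 : HasDerivAt (fun y : ℝ => Real.cosh y + 2) (Real.sinh y) y := by
        simpa using (Real.hasDerivAt_cosh y).add_const 2
      have h2 : HasDerivAt (fun y : ℝ => y * (Real.cosh y + 2))
          ((Real.cosh y + 2) + y * Real.sinh y) y := by
        exact ((hasDerivAt_id' y).mul h1).congr_deriv (by ring)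
      have h3 := h2.sub ((Real.hasDerivAt_sinh y).const_mul 3)
      exact h3.congr_deriv (by ring))
    (fun y hy => sub_nonneg.2 (L2 y hy)) le_rfl hx
  simpa using this

lemma key (ρ : ℝ) (hρ : 0 < ρ) :
    0 ≤ ρ^2 * (1 + Real.cosh ρ ^ 2) - Real.sinh ρ ^ 2 - ρ * (Real.cosh ρ * Real.sinh ρ) := by
  have h3 := L3 ρ hρ.le
  have hs : 0 < Real.sinh ρ := Real.sinh_pos_iff.2 hρ
  have hc : 1 ≤ Real.cosh ρ := Real.one_le_cosh ρ
  nlinarith [sq_nonneg (Real.cosh ρ - 1), sq_nonneg (3 * Real.sinh ρ - ρ * (Real.cosh ρ + 2)),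
    mul_nonneg (mul_nonneg hρ.le hs.le) (sub_nonneg.2 hc),
    mul_le_mul_of_nonneg_left h3 (le_trans zero_le_one hc),
    mul_le_mul h3 h3 (by positivity) (by positivity)]

theorem stmt_4 :
    (∀ ρ : ℝ, 0 < ρ →
      0 ≤ 1 + (Real.cosh ρ) ^ 2 - (Real.sinh ρ) ^ 2 / ρ ^ 2 -
        Real.cosh ρ * Real.sinh ρ / ρ) ∧
    (∀ ρ : ℝ, 0 < ρ →
      0 ≤ 1 / (Real.sinh ρ) ^ 2 + (Real.cosh ρ / Real.sinh ρ) ^ 2 - 1 / ρ ^ 2 -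
        (Real.cosh ρ / Real.sinh ρ) / ρ) := by
  have first : ∀ ρ : ℝ, 0 < ρ →
      0 ≤ 1 + (Real.cosh ρ) ^ 2 - (Real.sinh ρ) ^ 2 / ρ ^ 2 -
        Real.cosh ρ * Real.sinh ρ / ρ := by
    intro ρ hρ
    have hk := key ρ hρ
    have hρ' : ρ ≠ 0 := hρ.ne'
    have heq : 1 + (Real.cosh ρ) ^ 2 - (Real.sinh ρ) ^ 2 / ρ ^ 2 -
        Real.cosh ρ * Real.sinh ρ / ρ
        = (ρ^2 * (1 + Real.cosh ρ ^ 2) - Real.sinh ρ ^ 2 - ρ * (Real.cosh ρ * Real.sinh ρ)) / ρ^2 := by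
      field_simp
    rw [heq]
    positivity
  refine ⟨first, fun ρ hρ => ?_⟩
  have hs : 0 < Real.sinh ρ := Real.sinh_pos_iff.2 hρ
  have h1 := first ρ hρ
  have heq : 1 / (Real.sinh ρ) ^ 2 + (Real.cosh ρ / Real.sinh ρ) ^ 2 - 1 / ρ ^ 2 -
        (Real.cosh ρ / Real.sinh ρ) / ρ
      = (1 + (Real.cosh ρ) ^ 2 - (Real.sinh ρ) ^ 2 / ρ ^ 2 -
        Real.cosh ρ * Real.sinh ρ / ρ) / (Real.sinh ρ)^2 := by
    field_simp
  rw [heq]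
  positivity
end

section
/- For every ρ > 0, the series ∑_{l=1}^{∞} (8l² + 4l - 12) · 4^{l-1}/(2l+2)! · ρ^{2l} converges and its sum equals g(ρ) := 1 + cosh²(ρ) - sinh²(ρ)/ρ² - cosh(ρ) sinh(ρ)/ρ. -/
open Real

theorem stmt_5 (ρ : ℝ) (hρ : 0 < ρ) :
    HasSum
      (fun n : ℕ =>
        (8 * ((n : ℝ) + 1) ^ 2 + 4 * ((n : ℝ) + 1) - 12) * 4 ^ n /
          (Nat.factorial (2 * (n + 1) + 2)) * ρ ^ (2 * (n + 1)))
      (1 + (Real.cosh ρ) ^ 2 - (Real.sinh ρ) ^ 2 / ρ ^ 2 -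
        Real.cosh ρ * Real.sinh ρ / ρ) := by
  have hρ' : ρ ≠ 0 := ne_of_gt hρ
  have A := Real.hasSum_cosh (2*ρ)
  have B := Real.hasSum_sinh (2*ρ)
  have A1 : HasSum (fun n : ℕ => (2*ρ)^(2*(n+1))/((2*(n+1)).factorial : ℝ))
      (Real.cosh (2*ρ) - 1) := by
    have h := (hasSum_nat_add_iff' (f := fun n : ℕ => (2*ρ)^(2*n)/((2*n).factorial : ℝ)) 1).mpr A
    simpa using h
  have A2 : HasSum (fun n : ℕ => (2*ρ)^(2*(n+2))/((2*(n+2)).factorial : ℝ))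
      (Real.cosh (2*ρ) - (1 + 2*ρ^2)) := by
    have h := (hasSum_nat_add_iff' (f := fun n : ℕ => (2*ρ)^(2*n)/((2*n).factorial : ℝ)) 2).mpr A
    have e : ∑ i ∈ Finset.range 2, (2*ρ)^(2*i)/((2*i).factorial : ℝ) = 1 + 2*ρ^2 := by
      simp [Finset.sum_range_succ, Nat.factorial]
      ring
    rw [e] at h
    exact h
  have B1 : HasSum (fun n : ℕ => (2*ρ)^(2*(n+1)+1)/((2*(n+1)+1).factorial : ℝ))
      (Real.sinh (2*ρ) - 2*ρ) := by
    have h := (hasSum_nat_add_iff' (f := fun n : ℕ => (2*ρ)^(2*n+1)/((2*n+1).factorial : ℝ)) 1).mpr B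
    simpa using h
  have H := ((A1.div_const 2).sub (A2.div_const (2*ρ^2))).sub (B1.div_const (2*ρ))
  convert H using 1
  · rfl
  · funext n
    have e2 : 2*(n+2) = (2*(n+1)+1)+1 := by ring
    have e3 : 2*(n+1)+2 = (2*(n+1)+1)+1 := by ring
    rw [e2, e3, Nat.factorial_succ, Nat.factorial_succ (2*(n+1))]
    have hf : ((2*(n+1)).factorial : ℝ) ≠ 0 := by positivity
    have hp : (2:ℝ)*ρ = 2*ρ := rfl
    have hpow : (2*ρ)^(2*(n+1)) = 4^(n+1) * ρ^(2*(n+1)) := by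
      rw [mul_pow, pow_mul]; norm_num
    have hpow1 : (2*ρ)^(2*(n+1)+1) = 4^(n+1) * ρ^(2*(n+1)) * (2*ρ) := by
      rw [pow_succ, hpow]
    have hpow2 : (2*ρ)^(2*(n+1)+1+1) = 4^(n+1) * ρ^(2*(n+1)) * (2*ρ) * (2*ρ) := by
      rw [pow_succ, hpow1]
    rw [hpow, hpow1, hpow2]
    have h4 : (4:ℝ)^(n+1) = 4 * 4^n := by ring
    rw [h4]
    push_cast
    field_simp
    ring
  · rw [Real.cosh_two_mul, Real.sinh_two_mul, Real.cosh_sq]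
    field_simp
    ring
end

section
/- For every t > 0 and every ρ > 0, ∂²_ρ log K₃(t,ρ) - coth(ρ) ∂_ρ log K₃(t,ρ) > 0, where K₃(t,ρ) = (4πt)^{-3/2} (ρ/sinh ρ) e^{-t - ρ²/(4t)} and ∂_ρ, ∂²_ρ denote the first and second ordinary derivatives in ρ. -/
open Real

lemma pos_of_hasDeriv {f f' : ℝ → ℝ} (hd : ∀ x, HasDerivAt f (f' x) x) (h0 : f 0 = 0)
    (hp : ∀ x, 0 < x → 0 < f' x) {x : ℝ} (hx : 0 < x) : 0 < f x := by
  have hmono : StrictMonoOn f (Set.Ici 0) := by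
    refine strictMonoOn_of_deriv_pos (convex_Ici 0)
      (Differentiable.continuous fun y => (hd y).differentiableAt).continuousOn ?_
    intro y hy
    rw [interior_Ici] at hy
    rw [(hd y).deriv]
    exact hp y hy
  have := hmono Set.self_mem_Ici (Set.mem_Ici.2 hx.le) hx
  rwa [h0] at this

lemma lem1 {x : ℝ} (hx : 0 < x) : Real.sinh x < x * Real.cosh x := by
  have h := pos_of_hasDeriv (f := fun x => x * Real.cosh x - Real.sinh x)
    (f' := fun x => x * Real.sinh x)
    (fun y => by
      have H := ((hasDerivAt_id y).mul (Real.hasDerivAt_cosh y)).sub (Real.hasDerivAt_sinh y)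
      exact H.congr_deriv (by simp -failIfUnchanged only [id_eq, Pi.neg_apply, Nat.cast_ofNat]; ring))
    (by simp)
    (fun y hy => mul_pos hy (Real.sinh_pos_iff.2 hy)) hx
  simp -failIfUnchanged only [] at h
  linarith

lemma lem2 {x : ℝ} (hx : 0 < x) : 2 * Real.cosh x - 2 < x * Real.sinh x := by
  have h := pos_of_hasDeriv (f := fun x => x * Real.sinh x - 2 * Real.cosh x + 2)
    (f' := fun x => x * Real.cosh x - Real.sinh x)
    (fun y => by
      have H := (((hasDerivAt_id y).mul (Real.hasDerivAt_sinh y)).sub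
        ((Real.hasDerivAt_cosh y).const_mul 2)).add_const 2
      exact H.congr_deriv (by simp -failIfUnchanged only [id_eq, Pi.neg_apply, Nat.cast_ofNat]; ring))
    (by simp)
    (fun y hy => by simp -failIfUnchanged only []; have := lem1 hy; linarith) hx
  simp -failIfUnchanged only [] at h
  linarith

lemma lem3 {x : ℝ} (hx : 0 < x) : 3 * Real.sinh x < 2 * x + x * Real.cosh x := by
  have h := pos_of_hasDeriv (f := fun x => 2 * x + x * Real.cosh x - 3 * Real.sinh x)
    (f' := fun x => 2 - 2 * Real.cosh x + x * Real.sinh x)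
    (fun y => by
      have H := (((hasDerivAt_id y).const_mul 2).add
        ((hasDerivAt_id y).mul (Real.hasDerivAt_cosh y))).sub
        ((Real.hasDerivAt_sinh y).const_mul 3)
      exact H.congr_deriv (by simp -failIfUnchanged only [id_eq, Pi.neg_apply, Nat.cast_ofNat]; ring))
    (by simp)
    (fun y hy => by simp -failIfUnchanged only []; have := lem2 hy; linarith) hx
  simp -failIfUnchanged only [] at h
  linarith

lemma lem4 {x : ℝ} (hx : 0 < x) : (12 - x ^ 2) * Real.cosh x < 12 + 5 * x ^ 2 := by
  have h2 : ∀ y : ℝ, 0 < y →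
      0 < 10 - 10 * Real.cosh y + 4 * (y * Real.sinh y) + y ^ 2 * Real.cosh y := by
    intro y hy
    refine pos_of_hasDeriv
      (f := fun z => 10 - 10 * Real.cosh z + 4 * (z * Real.sinh z) + z ^ 2 * Real.cosh z)
      (f' := fun z =>
      6 * (z * Real.cosh z) - 6 * Real.sinh z + z ^ 2 * Real.sinh z) ?_ (by simp) ?_ hy
    · intro z
      have H := ((((Real.hasDerivAt_cosh z).const_mul 10).const_sub 10).add
        (((hasDerivAt_id z).mul (Real.hasDerivAt_sinh z)).const_mul 4)).add
        (((hasDerivAt_pow 2 z).mul (Real.hasDerivAt_cosh z)))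
      exact H.congr_deriv (by simp -failIfUnchanged only [id_eq, Pi.neg_apply, Nat.cast_ofNat]; ring)
    · intro z hz
      simp -failIfUnchanged only []
      have h1 := lem1 hz
      have hs := Real.sinh_pos_iff.2 hz
      nlinarith
  have h1 : ∀ y : ℝ, 0 < y →
      0 < 10 * y + 2 * (y * Real.cosh y) - (12 - y ^ 2) * Real.sinh y := by
    intro y hy
    refine pos_of_hasDeriv
      (f := fun z => 10 * z + 2 * (z * Real.cosh z) - (12 - z ^ 2) * Real.sinh z)
      (f' := fun z =>
      10 - 10 * Real.cosh z + 4 * (z * Real.sinh z) + z ^ 2 * Real.cosh z) ?_ (by simp) ?_ hy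
    · intro z
      have H := ((((hasDerivAt_id z).const_mul 10)).add
        (((hasDerivAt_id z).mul (Real.hasDerivAt_cosh z)).const_mul 2)).sub
        (((hasDerivAt_pow 2 z).neg.const_add 12).mul (Real.hasDerivAt_sinh z))
      exact H.congr_deriv (by simp -failIfUnchanged only [id_eq, Pi.neg_apply, Nat.cast_ofNat]; ring)
    · exact h2
  have h0 := pos_of_hasDeriv (f := fun y => 12 + 5 * y ^ 2 - (12 - y ^ 2) * Real.cosh y)
    (f' := fun y => 10 * y + 2 * (y * Real.cosh y) - (12 - y ^ 2) * Real.sinh y)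
    (fun y => by
      have H := (((hasDerivAt_pow 2 y).const_mul 5).const_add 12).sub
        (((hasDerivAt_pow 2 y).neg.const_add 12).mul (Real.hasDerivAt_cosh y))
      exact H.congr_deriv (by simp -failIfUnchanged only [id_eq, Pi.neg_apply, Nat.cast_ofNat]; ring))
    (by simp)
    h1 hx
  simp -failIfUnchanged only [] at h0
  linarith

/-- The heat kernel of 3-dimensional hyperbolic space. -/
noncomputable def K₃ (t ρ : ℝ) : ℝ :=
  (4 * π * t) ^ (-(3 : ℝ) / 2) * (ρ / Real.sinh ρ) * Real.exp (-t - ρ ^ 2 / (4 * t))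

theorem stmt_6 (t : ℝ) (ht : 0 < t) (ρ : ℝ) (hρ : 0 < ρ) :
    0 < deriv (deriv (fun r => Real.log (K₃ t r))) ρ -
        (Real.cosh ρ / Real.sinh ρ) * deriv (fun r => Real.log (K₃ t r)) ρ := by
  have ht' : (t : ℝ) ≠ 0 := ht.ne'
  have h4πt : (0 : ℝ) < 4 * π * t := by positivity
  have hA : (0 : ℝ) < (4 * π * t) ^ (-(3 : ℝ) / 2) := Real.rpow_pos_of_pos h4πt _
  set G : ℝ → ℝ := fun r => r⁻¹ - Real.cosh r / Real.sinh r - r / (2 * t) with hG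
  -- eventual equality of log K₃ with an explicit formula
  have hev : (fun r => Real.log (K₃ t r)) =ᶠ[nhds ρ]
      (fun r => Real.log ((4 * π * t) ^ (-(3 : ℝ) / 2)) +
        (Real.log r - Real.log (Real.sinh r)) + (-t - r ^ 2 / (4 * t))) := by
    filter_upwards [eventually_gt_nhds hρ] with r hr
    have hs : 0 < Real.sinh r := Real.sinh_pos_iff.2 hr
    rw [K₃, Real.log_mul (by positivity) (Real.exp_ne_zero _),
      Real.log_mul hA.ne' (by positivity), Real.log_exp, Real.log_div hr.ne' hs.ne']
    try ring
  have hF : ∀ r : ℝ, 0 < r → HasDerivAt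
      (fun r => Real.log ((4 * π * t) ^ (-(3 : ℝ) / 2)) +
        (Real.log r - Real.log (Real.sinh r)) + (-t - r ^ 2 / (4 * t))) (G r) r := by
    intro r hr
    have hs : 0 < Real.sinh r := Real.sinh_pos_iff.2 hr
    have H := ((((Real.hasDerivAt_log hr.ne').sub
        ((Real.hasDerivAt_sinh r).log hs.ne')).const_add
        (Real.log ((4 * π * t) ^ (-(3 : ℝ) / 2)))).add
        (((hasDerivAt_pow 2 r).div_const (4 * t)).const_sub (-t)))
    refine H.congr_deriv ?_
    all_goals simp -failIfUnchanged only [hG]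
    all_goals field_simp
    all_goals ring
  have hev1 : deriv (fun r => Real.log (K₃ t r)) =ᶠ[nhds ρ] G := by
    have h1 := hev.deriv
    filter_upwards [h1, eventually_gt_nhds hρ] with r h1r hr
    rw [h1r, (hF r hr).deriv]
  have hd1 : deriv (fun r => Real.log (K₃ t r)) ρ = G ρ := hev1.self_of_nhds
  -- second derivative
  set s := Real.sinh ρ with hs_def
  set c := Real.cosh ρ with hc_def
  have hs : 0 < s := Real.sinh_pos_iff.2 hρ
  have hGd : HasDerivAt G (-(ρ ^ 2)⁻¹ - (s * s - c * c) / s ^ 2 - 1 / (2 * t)) ρ := by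
    have H := ((hasDerivAt_inv hρ.ne').sub
      ((Real.hasDerivAt_cosh ρ).div (Real.hasDerivAt_sinh ρ) hs.ne')).sub
      ((hasDerivAt_id ρ).div_const (2 * t))
    refine H.congr_deriv ?_
    all_goals simp -failIfUnchanged only [hs_def, hc_def]
    all_goals field_simp
    all_goals ring
  have hd2 : deriv (deriv (fun r => Real.log (K₃ t r))) ρ =
      -(ρ ^ 2)⁻¹ - (s * s - c * c) / s ^ 2 - 1 / (2 * t) := by
    rw [hev1.deriv_eq, hGd.deriv]
  rw [hd1, hd2]
  simp only [hG]
  -- now pure inequality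
  have hc2 : c ^ 2 = s ^ 2 + 1 := by rw [hs_def, hc_def]; exact Real.cosh_sq ρ
  have hc0 : 0 < c := hc_def ▸ Real.cosh_pos ρ
  have fa : 3 * (2 * s * c) < 2 * (2 * ρ) + 2 * ρ * (c ^ 2 + s ^ 2) := by
    have := lem3 (x := 2 * ρ) (by linarith)
    rwa [Real.sinh_two_mul, Real.cosh_two_mul] at this
  have fb : (12 - (2 * ρ) ^ 2) * (c ^ 2 + s ^ 2) < 12 + 5 * (2 * ρ) ^ 2 := by
    have := lem4 (x := 2 * ρ) (by linarith)
    rwa [Real.cosh_two_mul] at this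
  have fc : s < ρ * c := lem1 hρ
  have hh : 0 < ρ ^ 2 * s ^ 2 + 2 * ρ ^ 2 - s ^ 2 - ρ * s * c := by
    nlinarith [mul_lt_mul_of_pos_left fa hρ, fb]
  have hP : 0 < 2 * t * (ρ ^ 2 * s ^ 2 + 2 * ρ ^ 2 - s ^ 2 - ρ * s * c) +
      ρ ^ 2 * s * (ρ * c - s) := by
    have h1 : 0 < 2 * t * (ρ ^ 2 * s ^ 2 + 2 * ρ ^ 2 - s ^ 2 - ρ * s * c) := by positivity
    have h2 : 0 < ρ ^ 2 * s * (ρ * c - s) := by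
      apply mul_pos (by positivity); linarith
    linarith
  have hEq : -(ρ ^ 2)⁻¹ - (s * s - c * c) / s ^ 2 - 1 / (2 * t) -
      c / s * (ρ⁻¹ - c / s - ρ / (2 * t)) =
      (-(2 * t * s ^ 2) - ρ ^ 2 * s ^ 2 - 2 * t * ρ * s * c + ρ ^ 3 * s * c +
        4 * t * ρ ^ 2 * c ^ 2 - 2 * t * ρ ^ 2 * s ^ 2) / (2 * t * ρ ^ 2 * s ^ 2) := by
    field_simp
    ring
  have hN : (-(2 * t * s ^ 2) - ρ ^ 2 * s ^ 2 - 2 * t * ρ * s * c + ρ ^ 3 * s * c +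
        4 * t * ρ ^ 2 * c ^ 2 - 2 * t * ρ ^ 2 * s ^ 2) =
      2 * t * (ρ ^ 2 * s ^ 2 + 2 * ρ ^ 2 - s ^ 2 - ρ * s * c) + ρ ^ 2 * s * (ρ * c - s) := by
    linear_combination (4 * t * ρ ^ 2) * hc2
  rw [hEq, hN]
  exact div_pos hP (by positivity)
end
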